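/- Let D be a digraph, s₁, t₁ vertices with t₁ reachable from s₁, and let D' be obtained from D by adding two new vertices s₁' and t₁', a directed path from s₁' to s₁ of length d_D(s₁,s₁) + 1 = 1 (i.e., the arc s₁'s₁), the arc t₁t₁', and for certain vertices x of D directed paths from s₁' to x of length d_D(s₁,x) + 1 and from certain vertices y to t₁' of length d_D(y,t₁) + 1, all with new internal vertices. Then d_{D'}(s₁', t₁') = d_D(s₁, t₁) + 2. -/

import Mathlib

/-- A directed walk in the digraph with arc relation `A`, given as its list of
vertices (so a walk with `k` arcs is a list of `k+1` vertices). -/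
def IsWalk {V : Type*} (A : V → V → Prop) (s t : V) (p : List V) : Prop :=
  p.head? = some s ∧ p.getLast? = some t ∧ p.Chain' A

/-- A directed path: a walk with no repeated vertices. -/
def IsPath {V : Type*} (A : V → V → Prop) (s t : V) (p : List V) : Prop :=
  IsWalk A s t p ∧ p.Nodup

/-- The list of arcs of a walk given by its vertex list. -/
def arcsOf {V : Type*} (p : List V) : List (V × V) := p.zip p.tail

/-- The directed distance from `s` to `t`: the minimum number of arcs on a
directed path (equivalently, walk) from `s` to `t`, `⊤` if `t` is unreachable. -/
noncomputable def ddist {V : Type*} (A : V → V → Prop) (s t : V) : ℕ∞ :=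
  sInf {n : ℕ∞ | ∃ p : List V, IsWalk A s t p ∧ ((arcsOf p).length : ℕ∞) = n}

/-- The internal vertices of a walk given by its vertex list. -/
def internals {V : Type*} (p : List V) : List V := p.tail.dropLast

section helpers
variable {V V' : Type*} {A : V → V → Prop} {s t u : V} {p q : List V}

lemma IsWalk.ne_nil (h : IsWalk A s t p) : p ≠ [] := by
  rintro rfl; simp [IsWalk] at h

lemma arcsOf_length (p : List V) : (arcsOf p).length = p.tail.length := by
  simp [arcsOf, List.length_zip, List.length_tail]

lemma ddist_le_of_walk (h : IsWalk A s t p) : ddist A s t ≤ ((arcsOf p).length : ℕ∞) :=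
  sInf_le ⟨p, h, rfl⟩

lemma walk_single (s : V) : IsWalk A s s [s] := by
  refine ⟨rfl, rfl, ?_⟩; simp [List.Chain']

lemma ddist_self (s : V) : ddist A s s = 0 := by
  refine le_antisymm ?_ zero_le
  have := ddist_le_of_walk (walk_single (A := A) s)
  simpa [arcsOf] using this

lemma exists_walk_of_ddist {n : ℕ} (h : ddist A s t = (n : ℕ∞)) :
    ∃ p, IsWalk A s t p ∧ (arcsOf p).length = n := by
  have hlt : ddist A s t < (n : ℕ∞) + 1 := by
    rw [h]; exact_mod_cast Nat.lt_succ_self n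
  obtain ⟨a, ⟨p, hp, hpl⟩, hal⟩ := sInf_lt_iff.mp hlt
  have hge : (n : ℕ∞) ≤ a := h ▸ sInf_le ⟨p, hp, hpl⟩
  have : a = (n : ℕ∞) := le_antisymm (by exact_mod_cast (ENat.lt_add_one_iff (by simp)).mp hal) hge
  exact ⟨p, hp, by exact_mod_cast hpl ▸ this⟩

lemma IsWalk.append (hp : IsWalk A s t p) (hq : IsWalk A t u q) :
    IsWalk A s u (p ++ q.tail) := by
  obtain ⟨hph, hpl, hpc⟩ := hp
  obtain ⟨hqh, hql, hqc⟩ := hq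
  match q with
  | [] => simp at hqh
  | [b] =>
    simp at hqh hql; subst hqh
    simpa using ⟨hph, hql ▸ hpl, hpc⟩
  | b :: c :: r =>
    simp at hqh; subst hqh
    refine ⟨?_, ?_, ?_⟩
    · rw [List.head?_append, hph]; rfl
    · rw [List.getLast?_append]
      have : (c :: r).getLast? = some u := by
        rw [← hql]; simp [List.getLast?_cons_cons]
      simp [this]
    · rw [List.Chain', List.isChain_append]
      refine ⟨hpc, (List.isChain_cons_cons.mp hqc).2, ?_⟩
      intro x hx y hy
      rw [hpl] at hx
      simp only [Option.mem_def, Option.some.injEq] at hx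
      simp only [List.tail_cons, List.head?_cons, Option.mem_def, Option.some.injEq] at hy
      subst hx; rw [← hy]
      exact (List.isChain_cons_cons.mp hqc).1

lemma append_tail_length (hp : p ≠ []) (q : List V) :
    (p ++ q.tail).tail.length = p.tail.length + q.tail.length := by
  simp [List.length_tail, List.length_append]
  have : 1 ≤ p.length := List.length_pos_iff.mpr hp
  omega

lemma ddist_triangle (A : V → V → Prop) (s u t : V) :
    ddist A s t ≤ ddist A s u + ddist A u t := by
  by_cases h1 : ddist A s u = ⊤
  · simp [h1]
  by_cases h2 : ddist A u t = ⊤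
  · simp [h2]
  obtain ⟨m, hm⟩ := WithTop.ne_top_iff_exists.mp h1
  obtain ⟨n, hn⟩ := WithTop.ne_top_iff_exists.mp h2
  obtain ⟨p, hp, hpl⟩ := exists_walk_of_ddist hm.symm
  obtain ⟨q, hq, hql⟩ := exists_walk_of_ddist hn.symm
  have hw := hp.append hq
  have := ddist_le_of_walk hw
  rw [← hm, ← hn]
  rw [arcsOf_length] at hpl hql this
  refine this.trans ?_
  rw [append_tail_length hp.ne_nil, hpl, hql]
  push_cast
  exact le_rfl

lemma ddist_le_step {s u v : V} (h : A u v) : ddist A s v ≤ ddist A s u + 1 := by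
  refine (ddist_triangle A s u v).trans ?_
  gcongr
  have hw : IsWalk A u v [u, v] := ⟨rfl, rfl, by simp [List.Chain', h]⟩
  simpa [arcsOf] using ddist_le_of_walk hw

end helpers

section more
variable {V V' : Type*} {A : V → V → Prop} {A' : V' → V' → Prop}

lemma walk_bound (f : V' → ℕ∞) (hf : ∀ a b, A' a b → f b ≤ f a + 1) :
    ∀ (p : List V') (a b : V'), p.Chain' A' → p.head? = some a → p.getLast? = some b →
      f b ≤ f a + p.tail.length := by
  intro p
  induction p with
  | nil => intro a b _ hh; simp at hh
  | cons c q ih =>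
    intro a b hch hh hl
    simp only [List.head?_cons, Option.some.injEq] at hh
    subst hh
    match q with
    | [] =>
      simp only [List.getLast?_singleton, Option.some.injEq] at hl
      subst hl; simp
    | d :: r =>
      have h1 := (List.isChain_cons_cons.mp hch).1
      have h2 := (List.isChain_cons_cons.mp hch).2
      have hl' : (d :: r).getLast? = some b := by
        rw [← hl]; simp [List.getLast?_cons_cons]
      calc f b ≤ f d + (d :: r).tail.length := ih d b h2 rfl hl'
        _ ≤ (f c + 1) + (d :: r).tail.length := by gcongr; exact hf c d h1
        _ = f c + (c :: d :: r).tail.length := by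
            simp [List.length_tail]
            ring

lemma IsWalk.map {s t : V} {p : List V} (ι : V ↪ V')
    (hAA' : ∀ u v : V, (A' (ι u) (ι v) ↔ A u v)) (h : IsWalk A s t p) :
    IsWalk A' (ι s) (ι t) (p.map ι) := by
  obtain ⟨hh, hl, hc⟩ := h
  refine ⟨?_, ?_, ?_⟩
  · rw [List.head?_map, hh]; rfl
  · rw [List.getLast?_map, hl]; rfl
  · rw [List.Chain', List.isChain_map]
    exact List.IsChain.imp (fun a b hab => (hAA' a b).mpr hab) hc

lemma mem_arcsOf {p : List V'} {a b : V'} (h : (a, b) ∈ arcsOf p) :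
    ∃ i, ∃ hi : i + 1 < p.length, p[i] = a ∧ p[i + 1] = b := by
  obtain ⟨⟨i, hi⟩, hget⟩ := List.get_of_mem h
  simp only [arcsOf] at hget hi
  have hi' : i < p.tail.length := by
    simpa [arcsOf, List.length_zip, List.length_tail] using hi
  have hip : i + 1 < p.length := by
    simp [List.length_tail] at hi'; omega
  refine ⟨i, hip, ?_, ?_⟩
  · have := (List.getElem_zip (l := p) (l' := p.tail) (i := i) (h := hi))
    rw [List.get_eq_getElem, this] at hget
    exact congrArg Prod.fst hget
  · have := (List.getElem_zip (l := p) (l' := p.tail) (i := i) (h := hi))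
    rw [List.get_eq_getElem, this] at hget
    have h2 := congrArg Prod.snd hget
    simpa [List.getElem_tail] using h2

lemma getElem_mem_internals {p : List V'} {j : ℕ} (hj : j < p.length)
    (h0 : 0 < j) (hlt : j < p.length - 1) : p[j] ∈ internals p := by
  have hlen : p.tail.dropLast.length = p.length - 1 - 1 := by
    simp [List.length_tail]
  have hj' : j - 1 < p.tail.dropLast.length := by omega
  have : p.tail.dropLast[j - 1] = p[j] := by
    rw [List.getElem_dropLast, List.getElem_tail]
    congr 1; omega
  rw [internals, ← this]
  exact List.getElem_mem _

lemma head_getElem {p : List V'} {s : V'} (hh : p.head? = some s) (h : 0 < p.length) :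
    p[0] = s := by
  cases p with
  | nil => simp at hh
  | cons c q => simpa using hh

lemma getLast_getElem {p : List V'} {t : V'} (hl : p.getLast? = some t)
    (h : p.length - 1 < p.length) : p[p.length - 1] = t := by
  have hne : p ≠ [] := by rintro rfl; simp at hl
  rw [← List.getLast_eq_getElem]
  rwa [List.getLast?_eq_getLast hne, Option.some.injEq] at hl

end more

lemma getElem_congr' {α : Type*} (l : List α) (i j : ℕ) (h : i = j) (hj : j < l.length) :
    l[i]'(h ▸ hj) = l[j] := by subst h; rfl

noncomputable def phi {V V' : Type*} (A : V → V → Prop) (s₁ : V) (ι : V ↪ V') (t' : V')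
    (U W : Set V) (P Q : V → List V') (dval : ℕ) (v : V') : ℕ∞ :=
  letI : DecidableEq V' := Classical.decEq V'
  haveI : Decidable (∃ u, ι u = v) := Classical.propDecidable _
  haveI : Decidable (∃ x, x ∈ U ∧ v ∈ internals (P x)) := Classical.propDecidable _
  haveI : Decidable (∃ y, y ∈ W ∧ v ∈ internals (Q y)) := Classical.propDecidable _
  if v = t' then (dval : ℕ∞) + 2
  else if h : ∃ u, ι u = v then ddist A s₁ h.choose + 1
  else if h : ∃ x, x ∈ U ∧ v ∈ internals (P x) then ((P h.choose).idxOf v : ℕ∞)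
  else if h : ∃ y, y ∈ W ∧ v ∈ internals (Q y) then
    ddist A s₁ h.choose + 1 + ((Q h.choose).idxOf v : ℕ∞)
  else 0


/-- the key distance computation in the auxiliary digraph `D'` of the
short weak 2-linkage algorithm. `D'` (arc relation `A'` on `V'`) is obtained from `D`
(arc relation `A` on `V`, embedded via `ι`) by adding new vertices `s₁', t₁'` and,
for each `x` in a set `U ∋ s₁`, a directed path `P x` from `s₁'` to `x` of length
`d_D(s₁,x) + 1`, and for each `y` in a set `W ∋ t₁`, a directed path `Q y` from `y`
to `t₁'` of length `d_D(y,t₁) + 1`, all with pairwise-distinct new internal vertices,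
and no other arcs. Then `d_{D'}(s₁',t₁') = d_D(s₁,t₁) + 2`. -/
theorem stmt_14 {V V' : Type*} (A : V → V → Prop) (s₁ t₁ : V) (dval : ℕ)
    (hreach : ddist A s₁ t₁ = (dval : ℕ∞))
    (ι : V ↪ V') (s' t' : V')
    (hs' : s' ∉ Set.range ι) (ht' : t' ∉ Set.range ι) (hst' : s' ≠ t')
    (U W : Set V) (hsU : s₁ ∈ U) (htW : t₁ ∈ W)
    (A' : V' → V' → Prop)
    (hAA' : ∀ u v : V, (A' (ι u) (ι v) ↔ A u v))
    (P Q : V → List V')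
    (hP : ∀ x ∈ U, IsPath A' s' (ι x) (P x) ∧
      ((arcsOf (P x)).length : ℕ∞) = ddist A s₁ x + 1)
    (hQ : ∀ y ∈ W, IsPath A' (ι y) t' (Q y) ∧
      ((arcsOf (Q y)).length : ℕ∞) = ddist A y t₁ + 1)
    (hPnew : ∀ x ∈ U, ∀ z ∈ internals (P x), z ∉ Set.range ι ∧ z ≠ s' ∧ z ≠ t')
    (hQnew : ∀ y ∈ W, ∀ z ∈ internals (Q y), z ∉ Set.range ι ∧ z ≠ s' ∧ z ≠ t')
    (hPdisj : ∀ x ∈ U, ∀ x' ∈ U, x ≠ x' →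
      ∀ z ∈ internals (P x), z ∉ internals (P x'))
    (hQdisj : ∀ y ∈ W, ∀ y' ∈ W, y ≠ y' →
      ∀ z ∈ internals (Q y), z ∉ internals (Q y'))
    (hPQdisj : ∀ x ∈ U, ∀ y ∈ W, ∀ z ∈ internals (P x), z ∉ internals (Q y))
    (harcs : ∀ a b : V', A' a b →
      (∃ u v : V, a = ι u ∧ b = ι v) ∨
      (∃ x ∈ U, (a, b) ∈ arcsOf (P x)) ∨
      (∃ y ∈ W, (a, b) ∈ arcsOf (Q y))) :
    ddist A' s' t' = ddist A s₁ t₁ + 2 := by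
  letI : DecidableEq V' := Classical.decEq V'
  set φ : V' → ℕ∞ := phi A s₁ ι t' U W P Q dval with hφ
  -- value lemmas
  have phi_t' : φ t' = (dval : ℕ∞) + 2 := by simp [hφ, phi]
  have phi_iota : ∀ u : V, φ (ι u) = ddist A s₁ u + 1 := by
    intro u
    have h1 : ¬ (ι u = t') := fun h => ht' ⟨u, h⟩
    have hex : ∃ w, ι w = ι u := ⟨u, rfl⟩
    rw [hφ]; simp only [phi]
    rw [if_neg h1, dif_pos hex, ι.injective hex.choose_spec]
  have uniqueP : ∀ x ∈ U, ∀ x' ∈ U, ∀ z, z ∈ internals (P x) → z ∈ internals (P x') →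
      x = x' := by
    intro x hx x' hx' z h h'
    by_contra hne
    exact hPdisj x hx x' hx' hne z h h'
  have uniqueQ : ∀ y ∈ W, ∀ y' ∈ W, ∀ z, z ∈ internals (Q y) → z ∈ internals (Q y') →
      y = y' := by
    intro y hy y' hy' z h h'
    by_contra hne
    exact hQdisj y hy y' hy' hne z h h'
  have phi_P : ∀ x ∈ U, ∀ z ∈ internals (P x), φ z = ((P x).idxOf z : ℕ∞) := by
    intro x hx z hz
    have h1 : ¬ (z = t') := (hPnew x hx z hz).2.2
    have h2 : ¬ ∃ u, ι u = z := fun ⟨u, hu⟩ => (hPnew x hx z hz).1 ⟨u, hu⟩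
    have hex : ∃ x', x' ∈ U ∧ z ∈ internals (P x') := ⟨x, hx, hz⟩
    rw [hφ]; simp only [phi]
    rw [if_neg h1, dif_neg h2, dif_pos hex,
      uniqueP _ hex.choose_spec.1 x hx z hex.choose_spec.2 hz]
  have phi_Q : ∀ y ∈ W, ∀ z ∈ internals (Q y),
      φ z = ddist A s₁ y + 1 + ((Q y).idxOf z : ℕ∞) := by
    intro y hy z hz
    have h1 : ¬ (z = t') := (hQnew y hy z hz).2.2
    have h2 : ¬ ∃ u, ι u = z := fun ⟨u, hu⟩ => (hQnew y hy z hz).1 ⟨u, hu⟩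
    have h3 : ¬ ∃ x, x ∈ U ∧ z ∈ internals (P x) :=
      fun ⟨x, hx, hzx⟩ => hPQdisj x hx y hy z hzx hz
    have hex : ∃ y', y' ∈ W ∧ z ∈ internals (Q y') := ⟨y, hy, hz⟩
    rw [hφ]; simp only [phi]
    rw [if_neg h1, dif_neg h2, dif_neg h3, dif_pos hex,
      uniqueQ _ hex.choose_spec.1 y hy z hex.choose_spec.2 hz]
  have phi_s' : φ s' = 0 := by
    have h1 : ¬ (s' = t') := hst'
    have h2 : ¬ ∃ u, ι u = s' := fun ⟨u, hu⟩ => hs' ⟨u, hu⟩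
    have h3 : ¬ ∃ x, x ∈ U ∧ s' ∈ internals (P x) :=
      fun ⟨x, hx, hz⟩ => (hPnew x hx s' hz).2.1 rfl
    have h4 : ¬ ∃ y, y ∈ W ∧ s' ∈ internals (Q y) :=
      fun ⟨y, hy, hz⟩ => (hQnew y hy s' hz).2.1 rfl
    rw [hφ]; simp only [phi]
    rw [if_neg h1, dif_neg h2, dif_neg h3, dif_neg h4]
  -- key arc inequality
  have key : ∀ a b : V', A' a b → φ b ≤ φ a + 1 := by
    intro a b hab
    rcases harcs a b hab with ⟨u, v, rfl, rfl⟩ | ⟨x, hx, hmem⟩ | ⟨y, hy, hmem⟩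
    · rw [phi_iota, phi_iota]
      have hA : A u v := (hAA' u v).mp hab
      have hstep := ddist_le_step (s := s₁) hA
      calc ddist A s₁ v + 1 ≤ (ddist A s₁ u + 1) + 1 := by gcongr
        _ = ddist A s₁ u + 1 + 1 := rfl
    · obtain ⟨⟨⟨hh, hl, hc⟩, hnd⟩, hlen⟩ := hP x hx
      obtain ⟨i, hi, ha, hb⟩ := mem_arcsOf hmem
      have hlen' : (((P x).length - 1 : ℕ) : ℕ∞) = ddist A s₁ x + 1 := by
        rw [← hlen, arcsOf_length, List.length_tail]
      have hφa : φ a = (i : ℕ∞) := by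
        rcases Nat.eq_zero_or_pos i with h0 | h0
        · subst h0
          have : a = s' := by rw [← ha]; exact head_getElem hh (by omega)
          rw [this, phi_s']; simp
        · have hmemi : a ∈ internals (P x) :=
            ha ▸ getElem_mem_internals (by omega) h0 (by omega)
          rw [phi_P x hx a hmemi, ← ha, List.Nodup.idxOf_getElem hnd i (by omega)]
      have hφb : φ b = (i : ℕ∞) + 1 := by
        rcases eq_or_lt_of_le (show i + 1 ≤ (P x).length - 1 by omega) with heq | hlt
        · have hbl : b = ι x := by
            rw [← hb, getElem_congr' _ _ _ heq (by omega)]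
            exact getLast_getElem hl (by omega)
          rw [hbl, phi_iota, ← hlen', ← heq]
          push_cast; ring
        · have hmemb : b ∈ internals (P x) :=
            hb ▸ getElem_mem_internals hi (by omega) hlt
          rw [phi_P x hx b hmemb, ← hb, List.Nodup.idxOf_getElem hnd (i + 1) hi]
          push_cast; ring
      rw [hφa, hφb]
    · obtain ⟨⟨⟨hh, hl, hc⟩, hnd⟩, hlen⟩ := hQ y hy
      obtain ⟨i, hi, ha, hb⟩ := mem_arcsOf hmem
      have hlen' : (((Q y).length - 1 : ℕ) : ℕ∞) = ddist A y t₁ + 1 := by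
        rw [← hlen, arcsOf_length, List.length_tail]
      have hφa : φ a = ddist A s₁ y + 1 + (i : ℕ∞) := by
        rcases Nat.eq_zero_or_pos i with h0 | h0
        · subst h0
          have : a = ι y := by rw [← ha]; exact head_getElem hh (by omega)
          rw [this, phi_iota]; simp
        · have hmemi : a ∈ internals (Q y) :=
            ha ▸ getElem_mem_internals (by omega) h0 (by omega)
          rw [phi_Q y hy a hmemi, ← ha, List.Nodup.idxOf_getElem hnd i (by omega)]
      have hφb : φ b ≤ ddist A s₁ y + 1 + (i : ℕ∞) + 1 := by
        rcases eq_or_lt_of_le (show i + 1 ≤ (Q y).length - 1 by omega) with heq | hlt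
        · have hbl : b = t' := by
            rw [← hb, getElem_congr' _ _ _ heq (by omega)]
            exact getLast_getElem hl (by omega)
          have hdyt : ddist A y t₁ = (i : ℕ∞) := by
            apply WithTop.add_right_cancel (show (1:ℕ∞) ≠ ⊤ by simp)
            change ddist A y t₁ + 1 = (i : ℕ∞) + 1
            rw [← hlen', ← heq]; push_cast; ring
          rw [hbl, phi_t', ← hreach]
          calc ddist A s₁ t₁ + 2 ≤ (ddist A s₁ y + ddist A y t₁) + 2 := by
                gcongr; exact ddist_triangle A s₁ y t₁
            _ = ddist A s₁ y + 1 + (i : ℕ∞) + 1 := by rw [hdyt]; ring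
        · have hmemb : b ∈ internals (Q y) :=
            hb ▸ getElem_mem_internals hi (by omega) hlt
          rw [phi_Q y hy b hmemb, ← hb, List.Nodup.idxOf_getElem hnd (i + 1) hi]
          push_cast; ring_nf; exact le_rfl
      calc φ b ≤ ddist A s₁ y + 1 + (i : ℕ∞) + 1 := hφb
        _ = φ a + 1 := by rw [hφa]
  -- lower bound
  have hlow : (dval : ℕ∞) + 2 ≤ ddist A' s' t' := by
    apply le_sInf
    rintro n ⟨p, ⟨hh, hl, hc⟩, rfl⟩
    have hbd := walk_bound φ key p s' t' hc hh hl
    rw [phi_s', phi_t', zero_add] at hbd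
    rw [arcsOf_length]
    exact hbd
  -- upper bound
  obtain ⟨w, hw, hwl⟩ := exists_walk_of_ddist hreach
  obtain ⟨⟨hP1, _⟩, hPlen⟩ := hP s₁ hsU
  obtain ⟨⟨hQ1, _⟩, hQlen⟩ := hQ t₁ htW
  have hP1len : (P s₁).tail.length = 1 := by
    have : ((arcsOf (P s₁)).length : ℕ∞) = 1 := by rw [hPlen, ddist_self]; simp
    rw [arcsOf_length] at this; exact_mod_cast this
  have hQ1len : (Q t₁).tail.length = 1 := by
    have : ((arcsOf (Q t₁)).length : ℕ∞) = 1 := by rw [hQlen, ddist_self]; simp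
    rw [arcsOf_length] at this; exact_mod_cast this
  have hwmap := hw.map ι hAA'
  have hbig := (hP1.append hwmap).append hQ1
  have hup := ddist_le_of_walk hbig
  have hlen : (arcsOf ((P s₁ ++ (w.map ι).tail) ++ (Q t₁).tail)).length = dval + 2 := by
    rw [arcsOf_length, append_tail_length (by simp [hP1.ne_nil]) _,
      append_tail_length hP1.ne_nil _, hP1len, hQ1len]
    rw [arcsOf_length] at hwl
    simp [List.length_tail] at hwl ⊢
    omega
  rw [hlen] at hup
  rw [hreach]
  refine le_antisymm ?_ ?_
  · exact hup.trans_eq (by push_cast; ring)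
  · exact hlow
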